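/- Let 0 < μ < 1, and let v(θ) := (θ³ cos θ − sin³θ)/(θ cos θ − sin θ) for θ ∈ (0, π/2). Then v is strictly increasing on (0, π/2). -/

import Mathlib

open Real

lemma aux_tc_lt_sin {θ : ℝ} (h0 : 0 < θ) (h1 : θ < π / 2) :
    θ * Real.cos θ < Real.sin θ := by
  have hc : 0 < Real.cos θ := Real.cos_pos_of_mem_Ioo ⟨by linarith [Real.pi_pos], h1⟩
  have ht : θ < Real.tan θ := Real.lt_tan h0 h1
  rw [Real.tan_eq_sin_div_cos, lt_div_iff₀ hc] at ht
  linarith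

lemma aux_g_deriv (θ : ℝ) :
    HasDerivAt (fun t : ℝ => t * Real.sin t ^ 2 + 3 * t * Real.cos t ^ 2
      - 3 * Real.sin t * Real.cos t)
      (4 * Real.sin θ ^ 2 - 4 * θ * Real.sin θ * Real.cos θ) θ := by
  have hs : HasDerivAt Real.sin (Real.cos θ) θ := Real.hasDerivAt_sin θ
  have hc : HasDerivAt Real.cos (-Real.sin θ) θ := Real.hasDerivAt_cos θ
  have hid : HasDerivAt (fun t : ℝ => t) 1 θ := hasDerivAt_id θ
  have h1 := hid.mul (hs.pow 2)
  have h2 := ((hid.const_mul (3:ℝ)).mul (hc.pow 2))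
  have h3 := ((hs.const_mul (3:ℝ)).mul hc)
  have : HasDerivAt (fun t : ℝ => t * Real.sin t ^ 2 + 3 * t * Real.cos t ^ 2
      - 3 * Real.sin t * Real.cos t) _ θ := (h1.add h2).sub h3
  convert this using 1
  simp only [Pi.pow_apply]
  ring

lemma aux_g_pos {θ : ℝ} (h0 : 0 < θ) (h1 : θ < π / 2) :
    0 < θ * Real.sin θ ^ 2 + 3 * θ * Real.cos θ ^ 2 - 3 * Real.sin θ * Real.cos θ := by
  set g : ℝ → ℝ := fun t => t * Real.sin t ^ 2 + 3 * t * Real.cos t ^ 2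
      - 3 * Real.sin t * Real.cos t with hg
  have hmono : StrictMonoOn g (Set.Icc 0 (π / 2)) := by
    apply strictMonoOn_of_deriv_pos (convex_Icc _ _)
    · fun_prop
    · intro x hx
      rw [interior_Icc] at hx
      rw [(aux_g_deriv x).deriv]
      have hs : 0 < Real.sin x := Real.sin_pos_of_pos_of_lt_pi hx.1
        (lt_trans hx.2 (by linarith [Real.pi_pos]))
      have htc : x * Real.cos x < Real.sin x := aux_tc_lt_sin hx.1 hx.2
      nlinarith
  have h := hmono (Set.left_mem_Icc.mpr (by linarith [Real.pi_pos]))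
    ⟨le_of_lt h0, le_of_lt h1⟩ h0
  simpa [hg] using h

theorem v_strictMono (μ : ℝ) (hμ0 : 0 < μ) (hμ1 : μ < 1) :
    StrictMonoOn
      (fun θ : ℝ => (θ ^ 3 * Real.cos θ - (Real.sin θ) ^ 3) /
        (θ * Real.cos θ - Real.sin θ))
      (Set.Ioo 0 (π / 2)) := by
  have hD : ∀ θ ∈ Set.Ioo (0:ℝ) (π / 2), θ * Real.cos θ - Real.sin θ < 0 := by
    intro θ hθ
    have := aux_tc_lt_sin hθ.1 hθ.2
    linarith
  apply strictMonoOn_of_deriv_pos (convex_Ioo _ _)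
  · apply ContinuousOn.div
    · fun_prop
    · fun_prop
    · intro θ hθ
      exact ne_of_lt (hD θ hθ)
  · intro θ hθ
    rw [interior_Ioo] at hθ
    have hDne : θ * Real.cos θ - Real.sin θ ≠ 0 := ne_of_lt (hD θ hθ)
    have hs : HasDerivAt Real.sin (Real.cos θ) θ := Real.hasDerivAt_sin θ
    have hc : HasDerivAt Real.cos (-Real.sin θ) θ := Real.hasDerivAt_cos θ
    have hid : HasDerivAt (fun t : ℝ => t) 1 θ := hasDerivAt_id θ
    have hN : HasDerivAt (fun t : ℝ => t ^ 3 * Real.cos t - Real.sin t ^ 3)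
        (3 * θ ^ 2 * Real.cos θ - θ ^ 3 * Real.sin θ
          - 3 * Real.sin θ ^ 2 * Real.cos θ) θ := by
      have : HasDerivAt (fun t : ℝ => t ^ 3 * Real.cos t - Real.sin t ^ 3) _ θ :=
        ((hid.pow 3).mul hc).sub (hs.pow 3)
      convert this using 1
      simp only [Pi.pow_apply]
      ring
    have hDd : HasDerivAt (fun t : ℝ => t * Real.cos t - Real.sin t)
        (-(θ * Real.sin θ)) θ := by
      have : HasDerivAt (fun t : ℝ => t * Real.cos t - Real.sin t) _ θ :=
        (hid.mul hc).sub hs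
      convert this using 1
      ring
    have hdiv : HasDerivAt (fun θ : ℝ => (θ ^ 3 * Real.cos θ - (Real.sin θ) ^ 3) /
        (θ * Real.cos θ - Real.sin θ)) _ θ := hN.div hDd hDne
    rw [hdiv.deriv]
    apply div_pos
    · have key : (3 * θ ^ 2 * Real.cos θ - θ ^ 3 * Real.sin θ
          - 3 * Real.sin θ ^ 2 * Real.cos θ) * (θ * Real.cos θ - Real.sin θ)
          - (θ ^ 3 * Real.cos θ - Real.sin θ ^ 3) * (-(θ * Real.sin θ))
          = (θ - Real.sin θ) * (θ + Real.sin θ) *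
            (θ * Real.sin θ ^ 2 + 3 * θ * Real.cos θ ^ 2
              - 3 * Real.sin θ * Real.cos θ) := by ring
      rw [key]
      have hsl : Real.sin θ < θ := Real.sin_lt hθ.1
      have hsp : 0 < Real.sin θ := Real.sin_pos_of_pos_of_lt_pi hθ.1
        (lt_trans hθ.2 (by linarith [Real.pi_pos]))
      have hg := aux_g_pos hθ.1 hθ.2
      exact mul_pos (mul_pos (by linarith) (by linarith)) hg
    · nlinarith [hD θ hθ]
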